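/- Let W : [0,1]² → [-1,1] be a bounded measurable kernel and T_W : L²([0,1]) → L²([0,1]) the integral operator (T_W f)(x) = ∫ W(x,y) f(y) dy. Then the operator norm of T_W satisfies ‖T_W‖ ≤ √(‖W‖₁), where ‖W‖₁ = ∫∫ |W(x,y)| dx dy. -/

import Mathlib

open MeasureTheory
open scoped ENNReal NNReal

/-- The operator norm of the integral operator `T_W` is at most `√‖W‖₁`:
for every `f ∈ L²`, `‖T_W f‖₂ ≤ √‖W‖₁ · ‖f‖₂`. -/
theorem stmt2
    (W : ℝ × ℝ → ℝ) (hWmeas : Measurable W)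
    (hWrange : ∀ p : ℝ × ℝ, W p ∈ Set.Icc (-1 : ℝ) 1) :
    ∀ f : ℝ → ℝ, MemLp f 2 (volume.restrict (Set.Icc (0 : ℝ) 1)) →
      eLpNorm (fun x => ∫ y in Set.Icc (0 : ℝ) 1, W (x, y) * f y) 2
          (volume.restrict (Set.Icc (0 : ℝ) 1)) ≤
        ENNReal.ofReal
            (Real.sqrt (∫ x in Set.Icc (0 : ℝ) 1, ∫ y in Set.Icc (0 : ℝ) 1, |W (x, y)|)) *
          eLpNorm f 2 (volume.restrict (Set.Icc (0 : ℝ) 1)) := by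
  intro f hf
  set μ := volume.restrict (Set.Icc (0 : ℝ) 1) with hμdef
  have hμuniv : μ Set.univ = 1 := by
    simp [hμdef, Real.volume_Icc]
  have hW1 : ∀ p : ℝ × ℝ, (‖W p‖₊ : ℝ≥0∞) ≤ 1 := by
    intro p
    have h1 : ‖W p‖ ≤ 1 := by
      rw [Real.norm_eq_abs, abs_le]; exact ⟨(hWrange p).1, (hWrange p).2⟩
    have : ‖W p‖₊ ≤ (1 : ℝ≥0) := by exact_mod_cast h1
    exact_mod_cast this
  have hWm : Measurable (fun p : ℝ × ℝ => (‖W p‖₊ : ℝ≥0∞)) := hWmeas.enorm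
  set N := eLpNorm f 2 μ with hNdef
  have hN : N = (∫⁻ y, (‖f y‖₊ : ℝ≥0∞) ^ (2 : ℝ) ∂μ) ^ (1 / 2 : ℝ) := by
    rw [hNdef, eLpNorm_eq_lintegral_rpow_enorm_toReal (by norm_num) (by norm_num)]
    norm_num [enorm_eq_nnnorm]
  set h : ℝ → ℝ≥0∞ := fun x => ∫⁻ y, (‖W (x, y)‖₊ : ℝ≥0∞) ∂μ with hhdef
  have hhm : Measurable h := Measurable.lintegral_prod_right hWm
  -- pointwise key bound
  have key : ∀ x : ℝ, (‖∫ y in Set.Icc (0 : ℝ) 1, W (x, y) * f y‖₊ : ℝ≥0∞)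
      ≤ (h x) ^ (1 / 2 : ℝ) * N := by
    intro x
    have hconj : Real.HolderConjugate 2 2 := Real.HolderConjugate.two_two
    calc (‖∫ y in Set.Icc (0 : ℝ) 1, W (x, y) * f y‖₊ : ℝ≥0∞)
        ≤ ∫⁻ y, (‖W (x, y) * f y‖₊ : ℝ≥0∞) ∂μ :=
          enorm_integral_le_lintegral_enorm _
      _ = ∫⁻ y, ((fun y => (‖W (x, y)‖₊ : ℝ≥0∞)) * fun y => (‖f y‖₊ : ℝ≥0∞)) y ∂μ := by
          apply lintegral_congr
          intro y
          simp [nnnorm_mul, ENNReal.coe_mul]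
      _ ≤ (∫⁻ y, (‖W (x, y)‖₊ : ℝ≥0∞) ^ (2 : ℝ) ∂μ) ^ (1 / 2 : ℝ) *
            (∫⁻ y, (‖f y‖₊ : ℝ≥0∞) ^ (2 : ℝ) ∂μ) ^ (1 / 2 : ℝ) :=
          ENNReal.lintegral_mul_le_Lp_mul_Lq μ hconj
            ((hWm.comp (measurable_prodMk_left)).aemeasurable) hf.1.enorm
      _ ≤ (h x) ^ (1 / 2 : ℝ) * N := by
          rw [hN]
          gcongr
          refine lintegral_mono fun y => ?_
          calc (‖W (x, y)‖₊ : ℝ≥0∞) ^ (2 : ℝ)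
              ≤ (‖W (x, y)‖₊ : ℝ≥0∞) ^ (1 : ℝ) :=
                ENNReal.rpow_le_rpow_of_exponent_ge (hW1 _) (by norm_num)
            _ = (‖W (x, y)‖₊ : ℝ≥0∞) := ENNReal.rpow_one _
  have hint : ∀ x : ℝ, Integrable (fun y => |W (x, y)|) μ := fun x =>
    (integrable_const (1 : ℝ)).mono'
      ((hWmeas.comp measurable_prodMk_left).abs.aestronglyMeasurable)
      (ae_of_all _ fun y => by
        rw [Real.norm_eq_abs, abs_abs]
        exact abs_le.mpr ⟨(hWrange _).1, (hWrange _).2⟩)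
  set φ : ℝ → ℝ := fun x => ∫ y, |W (x, y)| ∂μ with hφdef
  have hφnn : ∀ x, 0 ≤ φ x := fun x => integral_nonneg fun y => abs_nonneg _
  have hφm : StronglyMeasurable φ :=
    (hWmeas.abs.stronglyMeasurable).integral_prod_right'
  have hφle : ∀ x, φ x ≤ 1 := by
    intro x
    calc φ x ≤ ∫ _, (1 : ℝ) ∂μ := integral_mono (hint x) (integrable_const _)
          (fun y => abs_le.mpr ⟨(hWrange _).1, (hWrange _).2⟩)
      _ = 1 := by simp [Measure.real, hμuniv]
  have hφint : Integrable φ μ := (integrable_const (1 : ℝ)).mono' hφm.aestronglyMeasurable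
      (ae_of_all _ fun x => by rw [Real.norm_eq_abs, abs_of_nonneg (hφnn x)]; exact hφle x)
  have hhx : ∀ x, h x = ENNReal.ofReal (φ x) := by
    intro x
    rw [hhdef]
    simp only [← enorm_eq_nnnorm, Real.enorm_eq_ofReal_abs]
    exact (ofReal_integral_eq_lintegral_ofReal (hint x)
      (ae_of_all _ fun y => abs_nonneg _)).symm
  have hlint : ∫⁻ x, h x ∂μ = ENNReal.ofReal (∫ x, φ x ∂μ) := by
    rw [lintegral_congr hhx,
      ← ofReal_integral_eq_lintegral_ofReal hφint (ae_of_all _ hφnn)]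
  have hA : (0 : ℝ) ≤ ∫ x, φ x ∂μ := integral_nonneg hφnn
  calc eLpNorm (fun x => ∫ y, W (x, y) * f y ∂μ) 2 μ
      = (∫⁻ x, (‖∫ y, W (x, y) * f y ∂μ‖₊ : ℝ≥0∞) ^ (2 : ℝ) ∂μ) ^ (1 / 2 : ℝ) := by
        rw [eLpNorm_eq_lintegral_rpow_enorm_toReal (by norm_num) (by norm_num)]
        norm_num [enorm_eq_nnnorm]
    _ ≤ (∫⁻ x, ((h x) ^ (1 / 2 : ℝ) * N) ^ (2 : ℝ) ∂μ) ^ (1 / 2 : ℝ) := by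
        gcongr with x
        exact key x
    _ = (∫⁻ x, h x * N ^ (2 : ℝ) ∂μ) ^ (1 / 2 : ℝ) := by
        congr 1
        refine lintegral_congr fun x => ?_
        rw [ENNReal.mul_rpow_of_nonneg _ _ (by norm_num), ← ENNReal.rpow_mul]
        norm_num
    _ = ((∫⁻ x, h x ∂μ) * N ^ (2 : ℝ)) ^ (1 / 2 : ℝ) := by
        rw [lintegral_mul_const _ hhm]
    _ = (∫⁻ x, h x ∂μ) ^ (1 / 2 : ℝ) * N := by
        rw [ENNReal.mul_rpow_of_nonneg _ _ (by norm_num), ← ENNReal.rpow_mul]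
        norm_num
    _ = ENNReal.ofReal (Real.sqrt (∫ x, φ x ∂μ)) * N := by
        rw [hlint, ENNReal.ofReal_rpow_of_nonneg hA (by norm_num),
          Real.sqrt_eq_rpow]
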